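/- If (V, V₊) is a pre-ordered vector space with an order unit e, then N_V is uniformly closed; consequently N_V = I_V, the intersection of all uniformly closed order ideals. -/

import Mathlib

open Pointwise

variable {V : Type*} [AddCommGroup V] [Module ℝ V]

/-- A wedge: closed under addition and nonnegative scalar multiplication. -/
def Wedge (K : Set V) : Prop :=
  (∀ a ∈ K, ∀ b ∈ K, a + b ∈ K) ∧ (∀ r : ℝ, 0 ≤ r → ∀ a ∈ K, r • a ∈ K)

/-- A cone: a wedge with K ∩ (-K) = {0}. -/
def IsCone (K : Set V) : Prop :=
  Wedge K ∧ ∀ a ∈ K, -a ∈ K → a = 0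

/-- Archimedean wedge: x - n•y ∈ K for all n ∈ ℕ (n ≥ 1) implies -y ∈ K. -/
def ArchWedge (K : Set V) : Prop :=
  ∀ x y : V, (∀ n : ℕ, 0 < n → x - (n : ℝ) • y ∈ K) → -y ∈ K

/-- Almost Archimedean wedge: x - n•y ∈ K for all n ∈ ℤ implies y = 0. -/
def AlmostArchWedge (K : Set V) : Prop :=
  ∀ x y : V, (∀ n : ℤ, x - (n : ℝ) • y ∈ K) → y = 0

/-- N_V : the infinitely small elements: ∃ y, -y ≤ n•x ≤ y for all n ∈ ℕ. -/
def infSmall (K : Set V) : Set V :=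
  {x | ∃ y : V, ∀ n : ℕ, 0 < n → (n : ℝ) • x + y ∈ K ∧ y - (n : ℝ) • x ∈ K}

/-- D_V : elements x with n•x + ξ ∈ V₊ for some ξ ∈ V₊ and all n ∈ ℕ. -/
def Dset (K : Set V) : Set V :=
  {x | ∃ ξ ∈ K, ∀ n : ℕ, 0 < n → (n : ℝ) • x + ξ ∈ K}

/-- An order ideal w.r.t. the wedge K: an order convex vector subspace. -/
def OrderIdeal (K A : Set V) : Prop :=
  (0 : V) ∈ A ∧ (∀ a ∈ A, ∀ b ∈ A, a + b ∈ A) ∧ (∀ r : ℝ, ∀ a ∈ A, r • a ∈ A) ∧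
    (∀ a ∈ A, ∀ b ∈ A, ∀ z : V, z - a ∈ K → b - z ∈ K → z ∈ A)

/-- A is uniformly closed: it contains all u-uniform limits of its sequences. -/
def UnifClosed (K A : Set V) : Prop :=
  ∀ u ∈ K, ∀ (xs : ℕ → V) (x : V), (∀ n, xs n ∈ A) →
    (∃ k : ℕ → ℕ, Monotone k ∧ Filter.Tendsto k Filter.atTop Filter.atTop ∧
      ∀ n, (k n : ℝ) • (xs n - x) + u ∈ K ∧ u - (k n : ℝ) • (xs n - x) ∈ K) →
    x ∈ A

/-- Archimedean element of K. -/
def ArchElem (K : Set V) (x : V) : Prop :=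
  x ∈ K ∧ ∀ y : V, (∀ n : ℕ, 0 < n → x + (n : ℝ) • y ∈ K) → y ∈ K

section aux
variable {K : Set V}

lemma aux_comb (hW : Wedge K) {a b : V} (ha : a ∈ K) (hb : b ∈ K) {s t : ℝ}
    (hs : 0 ≤ s) (ht : 0 ≤ t) : s • a + t • b ∈ K :=
  hW.1 _ (hW.2 s hs a ha) _ (hW.2 t ht b hb)

lemma aux_unscale (hW : Wedge K) {c : ℝ} (hc : 0 < c) {v : V} (h : c • v ∈ K) : v ∈ K := by
  have h2 := hW.2 c⁻¹ (by positivity) _ h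
  rwa [smul_smul, inv_mul_cancel₀ hc.ne', one_smul] at h2

lemma aux_eK (hW : Wedge K) (e : V) (hunit : ∀ x : V, ∃ n : ℕ, (n : ℝ) • e - x ∈ K) :
    e ∈ K := by
  obtain ⟨m, hm⟩ := hunit (-e)
  have h1 : ((m : ℝ) + 1) • e ∈ K := by
    have he : (m : ℝ) • e - (-e) = ((m : ℝ) + 1) • e := by module
    rwa [he] at hm
  exact aux_unscale hW (by positivity) h1

lemma aux_wit (hW : Wedge K) {x y : V}
    (hy : ∀ n : ℕ, 0 < n → (n : ℝ) • x + y ∈ K ∧ y - (n : ℝ) • x ∈ K) : y ∈ K := by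
  have h := hW.1 _ (hy 1 one_pos).1 _ (hy 1 one_pos).2
  have he : y = (1/2 : ℝ) • (((1:ℕ):ℝ) • x + y + (y - ((1:ℕ):ℝ) • x)) := by push_cast; module
  rw [he]; exact hW.2 _ (by norm_num) _ h

lemma aux_B (hW : Wedge K) {x y : V}
    (hy : ∀ n : ℕ, 0 < n → (n : ℝ) • x + y ∈ K ∧ y - (n : ℝ) • x ∈ K)
    (t : ℝ) : t • x + y ∈ K := by
  have hyK : y ∈ K := aux_wit hW hy
  rcases le_total 0 t with ht | ht
  · set m : ℕ := ⌈t⌉₊ + 1 with hm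
    have hm0 : (0:ℝ) < (m:ℝ) := by positivity
    have htm : t ≤ (m:ℝ) := (Nat.le_ceil t).trans (by push_cast [hm]; linarith)
    set s : ℝ := t / m with hsdef
    have hs0 : 0 ≤ s := div_nonneg ht hm0.le
    have hs1 : s ≤ 1 := by rw [hsdef, div_le_one hm0]; exact htm
    have hts : t = s * m := by rw [hsdef, div_mul_cancel₀ _ hm0.ne']
    have key : t • x + y = s • ((m:ℝ) • x + y) + (1 - s) • y := by rw [hts]; module
    rw [key]
    exact aux_comb hW (hy m (by omega)).1 hyK hs0 (by linarith)
  · set m : ℕ := ⌈-t⌉₊ + 1 with hm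
    have hm0 : (0:ℝ) < (m:ℝ) := by positivity
    have htm : -t ≤ (m:ℝ) := (Nat.le_ceil (-t)).trans (by push_cast [hm]; linarith)
    set s : ℝ := (-t) / m with hsdef
    have hs0 : 0 ≤ s := div_nonneg (by linarith) hm0.le
    have hs1 : s ≤ 1 := by rw [hsdef, div_le_one hm0]; exact htm
    have hts : t = -(s * m) := by rw [hsdef, div_mul_cancel₀ _ hm0.ne', neg_neg]
    have key : t • x + y = s • (y - (m:ℝ) • x) + (1 - s) • y := by rw [hts]; module
    rw [key]
    exact aux_comb hW (hy m (by omega)).2 hyK hs0 (by linarith)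

lemma aux_A (hW : Wedge K) (e : V) (hunit : ∀ x : V, ∃ n : ℕ, (n : ℝ) • e - x ∈ K)
    {x : V} (hx : x ∈ infSmall K) :
    ∀ n : ℕ, 0 < n → ((n:ℝ) • x + e ∈ K ∧ e - (n:ℝ) • x ∈ K) := by
  obtain ⟨y, hy⟩ := hx
  have heK := aux_eK hW e hunit
  obtain ⟨p, hp⟩ := hunit y
  have hQ : (0:ℝ) < (p:ℝ) + 1 := by positivity
  have hQe : ((p:ℝ) + 1) • e - y ∈ K := by
    have he : ((p:ℝ) + 1) • e - y = ((p:ℝ) • e - y) + e := by module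
    rw [he]; exact hW.1 _ hp _ heK
  intro n hn
  have h1 : 0 < (p+1)*n := by positivity
  constructor
  · apply aux_unscale hW hQ
    have he : ((p:ℝ)+1) • ((n:ℝ) • x + e)
        = ((((p+1)*n : ℕ)):ℝ) • x + y + (((p:ℝ)+1) • e - y) := by push_cast; module
    rw [he]; exact hW.1 _ (hy _ h1).1 _ hQe
  · apply aux_unscale hW hQ
    have he : ((p:ℝ)+1) • (e - (n:ℝ) • x)
        = y - ((((p+1)*n : ℕ)):ℝ) • x + (((p:ℝ)+1) • e - y) := by push_cast; module
    rw [he]; exact hW.1 _ (hy _ h1).2 _ hQe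


lemma aux_ideal (hW : Wedge K) (e : V) (hunit : ∀ x : V, ∃ n : ℕ, (n : ℝ) • e - x ∈ K) :
    OrderIdeal K (infSmall K) := by
  have heK := aux_eK hW e hunit
  refine ⟨⟨e, fun n hn => by refine ⟨?_, ?_⟩ <;> simpa using heK⟩, ?_, ?_, ?_⟩
  · rintro a ⟨ya, hya⟩ b ⟨yb, hyb⟩
    refine ⟨ya + yb, fun n hn => ⟨?_, ?_⟩⟩
    · have h := hW.1 _ (hya n hn).1 _ (hyb n hn).1
      have he : (n:ℝ) • (a + b) + (ya + yb)
          = ((n:ℝ) • a + ya) + ((n:ℝ) • b + yb) := by module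
      rw [he]; exact h
    · have h := hW.1 _ (hya n hn).2 _ (hyb n hn).2
      have he : (ya + yb) - (n:ℝ) • (a + b)
          = (ya - (n:ℝ) • a) + (yb - (n:ℝ) • b) := by module
      rw [he]; exact h
  · rintro r a ⟨y, hy⟩
    refine ⟨y, fun n hn => ⟨?_, ?_⟩⟩
    · have h := aux_B hW hy ((n:ℝ) * r)
      have he : (n:ℝ) • (r • a) + y = ((n:ℝ) * r) • a + y := by module
      rw [he]; exact h
    · have h := aux_B hW hy (-((n:ℝ) * r))
      have he : y - (n:ℝ) • (r • a) = (-((n:ℝ) * r)) • a + y := by module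
      rw [he]; exact h
  · rintro a ⟨ya, hya⟩ b ⟨yb, hyb⟩ z hza hbz
    have hyaK : ya ∈ K := aux_wit hW hya
    have hybK : yb ∈ K := aux_wit hW hyb
    refine ⟨ya + yb, fun n hn => ⟨?_, ?_⟩⟩
    · have h := hW.1 _ (hW.1 _ (hW.2 (n:ℝ) (by positivity) _ hza) _ (hya n hn).1) _ hybK
      have he : (n:ℝ) • z + (ya + yb)
          = ((n:ℝ) • (z - a) + ((n:ℝ) • a + ya)) + yb := by module
      rw [he]; exact h
    · have h := hW.1 _ (hW.1 _ (hW.2 (n:ℝ) (by positivity) _ hbz) _ (hyb n hn).2) _ hyaK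
      have he : (ya + yb) - (n:ℝ) • z
          = ((n:ℝ) • (b - z) + (yb - (n:ℝ) • b)) + ya := by module
      rw [he]; exact h

lemma aux_closed (hW : Wedge K) (e : V) (hunit : ∀ x : V, ∃ n : ℕ, (n : ℝ) • e - x ∈ K) :
    UnifClosed K (infSmall K) := by
  rintro u hu xs x hxs ⟨k, hk1, hk2, hk3⟩
  refine ⟨u + e, fun m hm => ?_⟩
  obtain ⟨n, hn⟩ := (hk2.eventually_ge_atTop m).exists
  have hkn : 0 < k n := lt_of_lt_of_le hm hn
  have hknR : (0:ℝ) < (k n : ℝ) := by exact_mod_cast hkn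
  have hmk : (m:ℝ) ≤ (k n : ℝ) := by exact_mod_cast hn
  set s : ℝ := (m:ℝ) / (k n : ℝ) with hsdef
  have hs0 : 0 ≤ s := by positivity
  have hs1 : s ≤ 1 := by rw [hsdef, div_le_one hknR]; exact hmk
  have hms : (m:ℝ) = s * (k n : ℝ) := by rw [hsdef, div_mul_cancel₀ _ hknR.ne']
  have hA := aux_A hW e hunit (hxs n) m hm
  constructor
  · have h1 : u - (m:ℝ) • (xs n - x) ∈ K := by
      have key : u - (m:ℝ) • (xs n - x)
          = s • (u - (k n : ℝ) • (xs n - x)) + (1 - s) • u := by rw [hms]; module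
      rw [key]; exact aux_comb hW (hk3 n).2 hu hs0 (by linarith)
    have key2 : (m:ℝ) • x + (u + e)
        = ((m:ℝ) • xs n + e) + (u - (m:ℝ) • (xs n - x)) := by module
    rw [key2]; exact hW.1 _ hA.1 _ h1
  · have h1 : u + (m:ℝ) • (xs n - x) ∈ K := by
      have key : u + (m:ℝ) • (xs n - x)
          = s • ((k n : ℝ) • (xs n - x) + u) + (1 - s) • u := by rw [hms]; module
      rw [key]; exact aux_comb hW (hk3 n).1 hu hs0 (by linarith)
    have key2 : (u + e) - (m:ℝ) • x
        = (e - (m:ℝ) • xs n) + (u + (m:ℝ) • (xs n - x)) := by module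
    rw [key2]; exact hW.1 _ hA.2 _ h1


end aux

/-- with an order unit, N_V is uniformly closed and equals the
intersection I_V of all uniformly closed order ideals. -/
theorem stmt14 (K : Set V) (hW : Wedge K) (e : V)
    (hunit : ∀ x : V, ∃ n : ℕ, (n : ℝ) • e - x ∈ K) :
    UnifClosed K (infSmall K) ∧
      infSmall K = ⋂₀ {A : Set V | OrderIdeal K A ∧ UnifClosed K A} := by
  have hcl := aux_closed hW e hunit
  refine ⟨hcl, subset_antisymm ?_
    (Set.sInter_subset_of_mem ⟨aux_ideal hW e hunit, hcl⟩)⟩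
  intro x hx
  rw [Set.mem_sInter]
  rintro A ⟨hAI, hAC⟩
  obtain ⟨y, hy⟩ := hx
  have hyK := aux_wit hW hy
  refine hAC y hyK (fun _ => 0) x (fun _ => hAI.1)
    ⟨fun n => n, fun _ _ h => h, Filter.tendsto_id, fun n => ?_⟩
  rcases Nat.eq_zero_or_pos n with h | h
  · subst h; refine ⟨?_, ?_⟩ <;> simpa using hyK
  constructor
  · have he : ((n:ℕ):ℝ) • ((0:V) - x) + y = y - (n:ℝ) • x := by module
    rw [he]; exact (hy n h).2
  · have he : y - ((n:ℕ):ℝ) • ((0:V) - x) = (n:ℝ) • x + y := by module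
    rw [he]; exact (hy n h).1
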